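/- arXiv:math/0603461 — 3 statements merged into one kernel-verified Lean document; each statement's English description precedes it below -/
import Mathlib

section
/- For symmetric convex bodies K, T in ℝⁿ and any integer k ≥ 3n, the entropy numbers satisfy e_k(K,T) ≤ 2·e_n(K,T)·exp(−c·k/n), where c > 0 is a universal constant. -/
open scoped Pointwise
open Set

/-- Euclidean space -/
abbrev E (n : ℕ) := EuclideanSpace ℝ (Fin n)

/-- symmetric convex body -/
def IsSymCB {n : ℕ} (K : Set (E n)) : Prop :=
  Convex ℝ K ∧ IsCompact K ∧ (interior K).Nonempty ∧ K = -K

/-- covering number: minimal number of translates of `T` needed to cover `K` -/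
noncomputable def covN {n : ℕ} (K T : Set (E n)) : ℕ :=
  sInf {N : ℕ | ∃ s : Finset (E n), s.card ≤ N ∧ K ⊆ ⋃ x ∈ s, x +ᵥ T}

/-- covering number with centers required to lie in `K` -/
noncomputable def covN' {n : ℕ} (K T : Set (E n)) : ℕ :=
  sInf {N : ℕ | ∃ s : Finset (E n), s.card ≤ N ∧ ↑s ⊆ K ∧ K ⊆ ⋃ x ∈ s, x +ᵥ T}

/-- entropy numbers -/
noncomputable def ek {n : ℕ} (k : ℝ) (K T : Set (E n)) : ℝ :=
  sInf {ε : ℝ | 0 < ε ∧ (covN K (ε • T) : ℝ) ≤ (2 : ℝ) ^ k}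

/-- polar body -/
def polar {n : ℕ} (K : Set (E n)) : Set (E n) :=
  {x | ∀ y ∈ K, (inner ℝ x y : ℝ) ≤ 1}

/-- Talagrand's γ_p functional of `K` w.r.t. the gauge of `T` -/
noncomputable def gammaP {n : ℕ} (p : ℝ) (K T : Set (E n)) : ℝ :=
  sInf {r : ℝ | ∃ A : ℕ → Finset (E n),
    (∀ j, ↑(A j) ⊆ K ∧ (A j).card ≤ 2 ^ 2 ^ j) ∧
    r = ⨆ x ∈ K, ∑' j : ℕ, (2 : ℝ) ^ ((j : ℝ) / p) * ⨅ y ∈ A j, gauge T (x - y)}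

section aux
open MeasureTheory
open scoped ENNReal

variable {n : ℕ}

lemma symcb_zero_mem_interior {T : Set (E n)} (hT : IsSymCB T) : 0 ∈ interior T := by
  obtain ⟨hconv, _, ⟨x, hx⟩, hsym⟩ := hT
  have hopen : IsOpen (-(interior T) : Set (E n)) := isOpen_interior.neg
  have hsub : (-(interior T) : Set (E n)) ⊆ T := by
    intro y hy
    rw [hsym]
    have := interior_subset (Set.mem_neg.1 hy)
    simpa using Set.neg_mem_neg.2 this
  have hsub' : (-(interior T) : Set (E n)) ⊆ interior T :=
    interior_maximal hsub hopen
  have hnx : -x ∈ interior T := hsub' (Set.neg_mem_neg.2 hx)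
  have h0 := hconv.interior hx hnx (by norm_num : (0:ℝ) ≤ 1/2) (by norm_num : (0:ℝ) ≤ 1/2)
    (by norm_num)
  simpa using h0

lemma exists_cover_of_compact {K T : Set (E n)} (hK : IsCompact K) (hT0 : 0 ∈ interior T)
    {ε : ℝ} (hε : 0 < ε) : ∃ s : Finset (E n), K ⊆ ⋃ x ∈ s, x +ᵥ ε • T := by
  have hopen : IsOpen (ε • interior T) := isOpen_interior.smul₀ hε.ne'
  have hcov : K ⊆ ⋃ x : E n, x +ᵥ ε • interior T := by
    intro z hz
    refine Set.mem_iUnion.2 ⟨z, Set.mem_vadd_set.2 ⟨0, ⟨0, hT0, smul_zero ε⟩, add_zero z⟩⟩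
  obtain ⟨s, hs⟩ := hK.elim_finite_subcover (fun x : E n => x +ᵥ ε • interior T)
    (fun x => hopen.vadd x) hcov
  refine ⟨s, hs.trans ?_⟩
  exact Set.iUnion₂_mono fun x _ => Set.vadd_set_mono (Set.smul_set_mono interior_subset)

lemma volumetric {T : Set (E n)} (hT : IsSymCB T) {δ : ℝ} (hδ : 0 < δ) :
    ∃ t : Finset (E n), ((t.card : ℝ) ≤ ((2 + δ) / δ) ^ n) ∧ T ⊆ ⋃ x ∈ t, x +ᵥ δ • T := by
  classical
  have h0T : (0 : E n) ∈ T := interior_subset (symcb_zero_mem_interior hT)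
  obtain ⟨hconv, hcomp, hint, hsym⟩ := hT
  set μ : Measure (E n) := volume with hμ
  have hμT_pos : 0 < μ T := Measure.measure_pos_of_nonempty_interior μ hint
  have hμT_fin : μ T ≠ ⊤ := hcomp.measure_lt_top.ne
  have hμint : μ (interior T) = μ T := by
    refine le_antisymm (measure_mono interior_subset) ?_
    calc μ T ≤ μ (interior T ∪ frontier T) := by
          rw [← closure_eq_interior_union_frontier]
          exact measure_mono subset_closure
      _ ≤ μ (interior T) + μ (frontier T) := measure_union_le _ _
      _ = μ (interior T) := by rw [hconv.addHaar_frontier μ, add_zero]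
  -- separated finsets
  set Sep : Finset (E n) → Prop :=
    fun s => ↑s ⊆ T ∧ (↑s : Set (E n)).Pairwise (fun x y => x - y ∉ δ • T) with hSep
  -- cardinality bound for separated finsets
  have key : ∀ s : Finset (E n), Sep s → (s.card : ℝ) ≤ ((2 + δ) / δ) ^ n := by
    rintro s ⟨hsT, hsep⟩
    have hδ2 : (0:ℝ) < δ / 2 := by positivity
    have hdisj : (↑s : Set (E n)).PairwiseDisjoint
        (fun x => x +ᵥ (δ / 2) • interior T) := by
      intro x hx y hy hxy
      refine Set.disjoint_left.2 fun z hzx hzy => ?_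
      obtain ⟨wa, ⟨a, ha, rfl⟩, hxa⟩ := Set.mem_vadd_set.1 hzx
      obtain ⟨wb, ⟨b, hb, rfl⟩, hyb⟩ := Set.mem_vadd_set.1 hzy
      simp only [vadd_eq_add] at hxa hyb
      have hxy_eq : x - y = (δ/2) • b + (δ/2) • (-a) := by
        have h1 : x = z - (δ/2) • a := by rw [← hxa]; abel
        have h2 : y = z - (δ/2) • b := by rw [← hyb]; abel
        rw [h1, h2, smul_neg]; abel
      have hbT : (δ/2) • b ∈ (δ/2) • T := smul_mem_smul_set (interior_subset hb)
      have hnaT : (δ/2) • (-a) ∈ (δ/2) • T := by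
        refine smul_mem_smul_set ?_
        rw [hsym]
        simpa using Set.neg_mem_neg.2 (interior_subset ha)
      have hmem : x - y ∈ (δ/2) • T + (δ/2) • T := by
        rw [hxy_eq]; exact Set.add_mem_add hbT hnaT
      rw [← hconv.add_smul hδ2.le hδ2.le] at hmem
      have : x - y ∈ δ • T := by convert hmem using 2; ring
      exact hsep hx hy hxy this
    have hmeas : ∀ x ∈ s, MeasurableSet (x +ᵥ (δ / 2) • interior T) :=
      fun x _ => ((isOpen_interior.smul₀ hδ2.ne').vadd x).measurableSet
    have hone : ∀ x ∈ s, μ (x +ᵥ (δ / 2) • interior T)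
        = ENNReal.ofReal ((δ/2) ^ n) * μ T := by
      intro x _
      rw [measure_vadd, Measure.addHaar_smul, hμint, finrank_euclideanSpace_fin,
        abs_of_nonneg (by positivity)]
    have hsum : μ (⋃ x ∈ s, x +ᵥ (δ / 2) • interior T)
        = (s.card : ℝ≥0∞) * (ENNReal.ofReal ((δ/2) ^ n) * μ T) := by
      rw [measure_biUnion_finset hdisj hmeas, Finset.sum_congr rfl hone,
        Finset.sum_const, nsmul_eq_mul]
    have hsub : (⋃ x ∈ s, x +ᵥ (δ / 2) • interior T) ⊆ (1 + δ/2) • T := by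
      rw [hconv.add_smul zero_le_one hδ2.le, one_smul]
      intro z hz
      simp only [Set.mem_iUnion] at hz
      obtain ⟨x, hxs, hzx⟩ := hz
      obtain ⟨w, hw, hxw⟩ := Set.mem_vadd_set.1 hzx
      rw [← hxw]
      exact Set.add_mem_add (hsT hxs) (Set.smul_set_mono interior_subset hw)
    have hineq : (s.card : ℝ≥0∞) * ENNReal.ofReal ((δ/2) ^ n) * μ T
        ≤ ENNReal.ofReal ((1 + δ/2) ^ n) * μ T := by
      rw [mul_assoc, ← hsum]
      calc μ (⋃ x ∈ s, x +ᵥ (δ / 2) • interior T) ≤ μ ((1 + δ/2) • T) :=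
            measure_mono hsub
        _ = ENNReal.ofReal ((1 + δ/2) ^ n) * μ T := by
            rw [Measure.addHaar_smul, finrank_euclideanSpace_fin,
              abs_of_nonneg (by positivity)]
    have hineq2 : (s.card : ℝ≥0∞) * ENNReal.ofReal ((δ/2) ^ n)
        ≤ ENNReal.ofReal ((1 + δ/2) ^ n) :=
      (ENNReal.mul_le_mul_iff_left hμT_pos.ne' hμT_fin).1 hineq
    have hineq3 : (s.card : ℝ≥0∞) ≤ ENNReal.ofReal ((1 + δ/2) ^ n / (δ/2) ^ n) := by
      rw [ENNReal.ofReal_div_of_pos (by positivity)]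
      rw [ENNReal.le_div_iff_mul_le
        (Or.inl (ENNReal.ofReal_pos.2 (by positivity)).ne') (Or.inl ENNReal.ofReal_ne_top)]
      exact hineq2
    have hineq4 : (s.card : ℝ) ≤ (1 + δ/2) ^ n / (δ/2) ^ n := by
      have := (ENNReal.le_ofReal_iff_toReal_le (by simp) (by positivity)).1 hineq3
      simpa using this
    calc (s.card : ℝ) ≤ (1 + δ/2) ^ n / (δ/2) ^ n := hineq4
      _ = ((2 + δ) / δ) ^ n := by
          rw [← div_pow]
          congr 1
          field_simp
  -- maximal separated finset
  set C : Set ℕ := {m | ∃ s : Finset (E n), Sep s ∧ s.card = m} with hC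
  have hCne : C.Nonempty := ⟨0, ∅, ⟨by simp, by simp⟩, rfl⟩
  have hCbdd : BddAbove C := by
    refine ⟨⌈((2 + δ) / δ) ^ n⌉₊, fun m hm => ?_⟩
    obtain ⟨s, hs, rfl⟩ := hm
    have h := (key s hs).trans (Nat.le_ceil (((2 + δ) / δ) ^ n))
    exact_mod_cast h
  obtain ⟨s, hsSep, hscard⟩ : ∃ s : Finset (E n), Sep s ∧ s.card = sSup C :=
    Nat.sSup_mem hCne hCbdd
  refine ⟨s, key s hsSep, ?_⟩
  intro z hz
  by_contra hzn
  simp only [Set.mem_iUnion, not_exists] at hzn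
  have hznot : ∀ x ∈ s, z - x ∉ δ • T := by
    intro x hxs hmem
    exact hzn x hxs (Set.mem_vadd_set.2 ⟨z - x, hmem, by rw [vadd_eq_add]; abel⟩)
  have h0δ : (0 : E n) ∈ δ • T := ⟨0, h0T, smul_zero δ⟩
  have hzs : z ∉ s := by
    intro hzs
    exact hznot z hzs (by simpa using h0δ)
  have hsymm : Symmetric (fun x y : E n => x - y ∉ δ • T) := by
    intro x y hxy hmem
    refine hxy ?_
    have : -(y - x) ∈ -(δ • T) := Set.neg_mem_neg.2 hmem
    rw [← smul_set_neg, ← hsym] at this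
    simpa using this
  have hSepIns : Sep (insert z s) := by
    constructor
    · rw [Finset.coe_insert]
      exact Set.insert_subset hz hsSep.1
    · rw [Finset.coe_insert, (haveI : Std.Symm (fun x y : E n => x - y ∉ δ • T) := ⟨fun a b h => hsymm h⟩; pairwise_insert_of_symm)]
      exact ⟨hsSep.2, fun x hxs _ => hznot x hxs⟩
  have hcard : (insert z s).card = sSup C + 1 := by
    rw [Finset.card_insert_of_notMem hzs, hscard]
  have : sSup C + 1 ∈ C := ⟨insert z s, hSepIns, hcard⟩
  have := le_csSup hCbdd this
  omega



lemma numeric_ineq {t : ℝ} (ht : 3 ≤ t) :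
    6 * (2:ℝ) ^ (-t) ≤ 2 * Real.exp (-(1/12) * t) := by
  have hlog2 : 0.6931471803 < Real.log 2 := Real.log_two_gt_d9
  have h8 : Real.exp ((3:ℕ) * Real.log 2) = 8 := by
    rw [Real.exp_nat_mul, Real.exp_log (by norm_num : (0:ℝ) < 2)]
    norm_num
  have hq : (3:ℝ)/4 ≤ Real.exp (-(1/4)) := by
    have := Real.add_one_le_exp (-(1/4) : ℝ)
    linarith
  have key3 : (3:ℝ) ≤ Real.exp (t * (Real.log 2 - 1/12)) := by
    have h1 : 3 * (Real.log 2 - 1/12) ≤ t * (Real.log 2 - 1/12) := by nlinarith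
    calc (3:ℝ) ≤ 8 * (3/4) := by norm_num
      _ ≤ 8 * Real.exp (-(1/4)) := by nlinarith
      _ = Real.exp ((3:ℕ) * Real.log 2) * Real.exp (-(1/4)) := by rw [h8]
      _ = Real.exp ((3:ℕ) * Real.log 2 + -(1/4)) := by rw [Real.exp_add]
      _ = Real.exp (3 * (Real.log 2 - 1/12)) := by congr 1; ring
      _ ≤ Real.exp (t * (Real.log 2 - 1/12)) := Real.exp_le_exp.2 h1
  have hmul := mul_le_mul_of_nonneg_right key3 (Real.exp_pos (Real.log 2 * (-t))).le
  rw [← Real.exp_add] at hmul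
  have harg : t * (Real.log 2 - 1/12) + Real.log 2 * (-t) = -(1/12) * t := by ring
  rw [harg] at hmul
  rw [Real.rpow_def_of_pos (by norm_num : (0:ℝ) < 2)]
  linarith

theorem stmt4 : ∃ c : ℝ, 0 < c ∧ ∀ (n : ℕ), 1 ≤ n → ∀ (K T : Set (E n)),
    IsSymCB K → IsSymCB T → ∀ k : ℕ, 3 * n ≤ k →
    ek (k : ℝ) K T ≤ 2 * ek (n : ℝ) K T * Real.exp (-c * k / n) := by
  refine ⟨1/12, by norm_num, ?_⟩
  intro n hn K T hK hT k hk
  classical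
  have hT0 : (0 : E n) ∈ interior T := symcb_zero_mem_interior hT
  have hKcomp : IsCompact K := hK.2.1
  have hnpos : (0:ℝ) < n := by exact_mod_cast hn
  have hnk : n ≤ k := le_trans (by omega) hk
  set ρ : ℝ := 2 * Real.exp (-(1/12) * ↑k / ↑n) with hρdef
  have hρpos : 0 < ρ := by positivity
  set m : ℕ := k - n with hm
  have hmk : (m:ℝ) = (k:ℝ) - n := by
    rw [hm]; push_cast [Nat.cast_sub hnk]; ring
  set δ : ℝ := 3 * (2:ℝ) ^ (-(m:ℝ)/n) with hδdef
  have hδpos : 0 < δ := by positivity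
  have hmn2 : (2:ℝ) ≤ (m:ℝ)/n := by
    rw [le_div_iff₀ hnpos, hmk]
    have : (3:ℝ) * n ≤ k := by exact_mod_cast hk
    linarith
  have hδle1 : δ ≤ 1 := by
    have h1 : (2:ℝ) ^ (-(m:ℝ)/n) ≤ (2:ℝ) ^ (-(2:ℝ)) := by
      apply Real.rpow_le_rpow_of_exponent_le (by norm_num)
      rw [neg_div]
      linarith
    have h2 : (2:ℝ) ^ (-(2:ℝ)) = 1/4 := by
      rw [Real.rpow_neg (by norm_num), show ((2:ℝ)) = ((2:ℕ):ℝ) by norm_num,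
        Real.rpow_natCast]
      norm_num
    rw [hδdef]
    nlinarith
  obtain ⟨t, htcard, htcov⟩ := volumetric hT hδpos
  have hpow : (2:ℝ) ^ (-(m:ℝ)/n) * (2:ℝ) ^ ((m:ℝ)/n) = 1 := by
    rw [← Real.rpow_add (by norm_num)]
    have harg0 : -(m:ℝ)/n + (m:ℝ)/n = 0 := by ring
    rw [harg0, Real.rpow_zero]
  have h3δ : (3:ℝ)/δ = (2:ℝ) ^ ((m:ℝ)/n) := by
    rw [hδdef, div_eq_iff (by positivity)]
    nlinarith [hpow]
  have htcard' : (t.card : ℝ) ≤ (2:ℝ) ^ (m:ℝ) := by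
    refine htcard.trans ?_
    have h1 : ((2+δ)/δ) ≤ 3/δ := by
      gcongr
      linarith
    calc ((2+δ)/δ)^n ≤ (3/δ)^n := pow_le_pow_left₀ (by positivity) h1 n
      _ = ((2:ℝ)^((m:ℝ)/n))^n := by rw [h3δ]
      _ = (2:ℝ)^(m:ℝ) := by
          rw [← Real.rpow_natCast ((2:ℝ)^((m:ℝ)/n)) n, ← Real.rpow_mul (by norm_num),
            div_mul_cancel₀ _ hnpos.ne']
  have hδρ : δ ≤ ρ := by
    have h6 : δ = 6 * (2:ℝ) ^ (-((k:ℝ)/n)) := by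
      rw [hδdef]
      have harg : -(m:ℝ)/n = 1 + -((k:ℝ)/n) := by
        rw [hmk]
        field_simp
        ring
      rw [harg, Real.rpow_add (by norm_num), Real.rpow_one]
      ring
    have ht3 : (3:ℝ) ≤ (k:ℝ)/n := by
      rw [le_div_iff₀ hnpos]
      exact_mod_cast hk
    have hnum := numeric_ineq ht3
    rw [h6, hρdef]
    calc 6 * (2:ℝ)^(-((k:ℝ)/n)) ≤ 2 * Real.exp (-(1/12) * ((k:ℝ)/n)) := hnum
      _ = 2 * Real.exp (-(1/12) * k / n) := by rw [mul_div_assoc]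
  -- main step: for any admissible ε at level n, ρ * ε is admissible at level k
  have hS : ∀ ε : ℝ, 0 < ε → (covN K (ε • T) : ℝ) ≤ (2:ℝ) ^ ((n:ℕ):ℝ) →
      ek (k:ℝ) K T ≤ ρ * ε := by
    intro ε hε hcovn
    obtain ⟨s₀, hs₀⟩ := exists_cover_of_compact hKcomp hT0 hε
    have hne : {N : ℕ | ∃ s : Finset (E n), s.card ≤ N ∧ K ⊆ ⋃ x ∈ s, x +ᵥ ε • T}.Nonempty :=
      ⟨s₀.card, s₀, le_rfl, hs₀⟩
    obtain ⟨s, hscard, hscov⟩ := Nat.sInf_mem hne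
    have hscard' : (s.card : ℝ) ≤ (2:ℝ) ^ ((n:ℕ):ℝ) := by
      refine le_trans ?_ hcovn
      exact_mod_cast hscard
    set u : Finset (E n) := s + t.image (fun y => ε • y) with hu
    have hucov : K ⊆ ⋃ x ∈ u, x +ᵥ (ε * δ) • T := by
      intro z hz
      have h1 := hscov hz
      simp only [Set.mem_iUnion] at h1
      obtain ⟨x, hxs, hzx⟩ := h1
      obtain ⟨w1, hw1, hxw⟩ := Set.mem_vadd_set.1 hzx
      obtain ⟨w, hwT, rfl⟩ := hw1
      have h2 := htcov hwT
      simp only [Set.mem_iUnion] at h2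
      obtain ⟨y, hyt, hwy⟩ := h2
      obtain ⟨v1, hv1, hyv⟩ := Set.mem_vadd_set.1 hwy
      obtain ⟨v, hvT, rfl⟩ := hv1
      refine Set.mem_iUnion₂.2 ⟨x + ε • y, ?_, ?_⟩
      · exact Finset.add_mem_add hxs (Finset.mem_image_of_mem _ hyt)
      · refine Set.mem_vadd_set.2 ⟨(ε*δ) • v, smul_mem_smul_set hvT, ?_⟩
        simp only [vadd_eq_add] at hxw hyv ⊢
        rw [← hxw, ← hyv, smul_add, mul_smul]
        abel
    have hucard : (u.card : ℝ) ≤ (2:ℝ) ^ ((k:ℕ):ℝ) := by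
      have h1 : u.card ≤ s.card * t.card :=
        le_trans Finset.card_add_le (Nat.mul_le_mul_left _ Finset.card_image_le)
      have h2 : (u.card : ℝ) ≤ (s.card : ℝ) * t.card := by exact_mod_cast h1
      calc (u.card:ℝ) ≤ (s.card:ℝ) * t.card := h2
        _ ≤ (2:ℝ)^((n:ℕ):ℝ) * (2:ℝ)^(m:ℝ) :=
            mul_le_mul hscard' htcard' (by positivity) (by positivity)
        _ = (2:ℝ)^((k:ℕ):ℝ) := by
            rw [← Real.rpow_add (by norm_num)]
            congr 1
            rw [hmk]
            ring
    have hmem : (ε * δ) ∈ {ε' : ℝ | 0 < ε' ∧ (covN K (ε' • T) : ℝ) ≤ (2:ℝ) ^ ((k:ℕ):ℝ)} := by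
      refine ⟨by positivity, ?_⟩
      have hcov2 : covN K ((ε*δ) • T) ≤ u.card := Nat.sInf_le ⟨u, le_rfl, hucov⟩
      exact le_trans (by exact_mod_cast hcov2) hucard
    have h1 : ek (k:ℝ) K T ≤ ε * δ := csInf_le ⟨0, fun x hx => hx.1.le⟩ hmem
    calc ek (k:ℝ) K T ≤ ε * δ := h1
      _ ≤ ε * ρ := mul_le_mul_of_nonneg_left hδρ hε.le
      _ = ρ * ε := mul_comm _ _
  -- nonemptiness of the admissible set at level n
  obtain ⟨ε₀, hε₀pos, hε₀sub⟩ : ∃ ε : ℝ, 0 < ε ∧ K ⊆ ε • T := by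
    obtain ⟨r, hr, hball⟩ := Metric.isOpen_iff.1 isOpen_interior 0 hT0
    obtain ⟨R, hR, hKR⟩ := hKcomp.isBounded.subset_ball_lt 0 0
    refine ⟨R / (r/2), by positivity, ?_⟩
    intro z hz
    have hzR : ‖z‖ < R := by simpa using hKR hz
    refine ⟨(R/(r/2))⁻¹ • z, ?_, smul_inv_smul₀ (by positivity) z⟩
    apply interior_subset
    apply hball
    rw [mem_ball_zero_iff, norm_smul, Real.norm_eq_abs, inv_div,
      abs_of_pos (by positivity)]
    have hlt : ((r/2)/R) * ‖z‖ < ((r/2)/R) * R :=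
      mul_lt_mul_of_pos_left hzR (by positivity)
    have heq : ((r/2)/R) * R = r/2 := by field_simp
    rw [heq] at hlt
    linarith
  have hSn_mem : ε₀ ∈ {ε' : ℝ | 0 < ε' ∧ (covN K (ε' • T) : ℝ) ≤ (2:ℝ) ^ ((n:ℕ):ℝ)} := by
    refine ⟨hε₀pos, ?_⟩
    have hc : covN K (ε₀ • T) ≤ 1 := by
      apply Nat.sInf_le
      refine ⟨{0}, by simp, ?_⟩
      intro z hz
      refine Set.mem_iUnion₂.2 ⟨0, Finset.mem_singleton_self 0, ?_⟩
      rw [zero_vadd]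
      exact hε₀sub hz
    have h1 : (1:ℝ) ≤ (2:ℝ) ^ ((n:ℕ):ℝ) := Real.one_le_rpow (by norm_num) (by positivity)
    exact le_trans (by exact_mod_cast hc) h1
  have hdiv : ek (k:ℝ) K T / ρ ≤ ek (n:ℝ) K T := by
    apply le_csInf ⟨ε₀, hSn_mem⟩
    rintro ε ⟨hε, hcov⟩
    rw [div_le_iff₀ hρpos]
    exact (hS ε hε hcov).trans_eq (mul_comm ρ ε)
  have hfin := (div_le_iff₀ hρpos).1 hdiv
  calc ek (k:ℝ) K T ≤ ek (n:ℝ) K T * ρ := hfin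
    _ = 2 * ek (n:ℝ) K T * Real.exp (-(1/12) * k / n) := by rw [hρdef]; ring

end aux
end

section
/- For symmetric convex bodies K, T in ℝⁿ and p ≥ 1, the Dudley sum is controlled by the Sudakov supremum up to a logarithmic factor: Σ_{k ≥ 1} k^{1/p − 1} e_k(K,T) ≤ C'_p · log(1+n) · sup_{k ≥ 1} k^{1/p} e_k(K,T), where C'_p depends only on p. -/
open scoped Pointwise
open Set

section Aux
variable {n : ℕ}

lemma neg_one_smul_set (T : Set (E n)) : (-1 : ℝ) • T = -T := by
  rw [Set.neg_smul_set, one_smul]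

lemma IsSymCB.zero_mem_interior {T : Set (E n)} (hT : IsSymCB T) : (0:E n) ∈ interior T := by
  obtain ⟨hconv, _, ⟨x, hx⟩, hsym⟩ := hT
  have hx' : -x ∈ interior T := by
    have h2 : x ∈ (-1 : ℝ) • interior T := by
      rw [← interior_smul₀ (by norm_num : (-1:ℝ) ≠ 0), neg_one_smul_set, ← hsym]
      exact hx
    obtain ⟨y, hy, hxy⟩ := h2
    have hyx : -x = y := by rw [← hxy]; simp
    rwa [hyx]
  have := hconv.interior hx hx' (by norm_num : (0:ℝ) ≤ 1/2) (by norm_num : (0:ℝ) ≤ 1/2)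
    (by norm_num)
  simpa using this

lemma IsSymCB.zero_mem {T : Set (E n)} (hT : IsSymCB T) : (0:E n) ∈ T :=
  interior_subset hT.zero_mem_interior

lemma smul_subset_smul_of_le {T : Set (E n)} (hconv : Convex ℝ T) (h0 : (0:E n) ∈ T)
    {a b : ℝ} (ha : 0 ≤ a) (hab : a ≤ b) : a • T ⊆ b • T := by
  rcases eq_or_lt_of_le (ha.trans hab) with hb | hb
  · have h : a = 0 := le_antisymm (hab.trans hb.symm.le) ha
    rw [h, ← hb]
  · rintro x ⟨t, ht, rfl⟩
    refine ⟨(a/b) • t, hconv.smul_mem_of_zero_mem h0 ht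
      ⟨by positivity, by rw [div_le_one hb]; exact hab⟩, ?_⟩
    show b • ((a/b) • t) = a • t
    rw [smul_smul]
    congr 1
    field_simp

lemma covN_le {K T : Set (E n)} {s : Finset (E n)} (h : K ⊆ ⋃ x ∈ s, x +ᵥ T) :
    covN K T ≤ s.card := Nat.sInf_le ⟨s, le_rfl, h⟩

lemma exists_cover {K T : Set (E n)} (hK : IsCompact K) (hT : (0:E n) ∈ interior T) :
    ∃ s : Finset (E n), K ⊆ ⋃ x ∈ s, x +ᵥ T := by
  obtain ⟨t, ht⟩ := hK.elim_finite_subcover (fun x : E n => x +ᵥ interior T)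
    (fun x => (isOpen_interior).vadd x)
    (fun y hy => mem_iUnion.2 ⟨y, Set.mem_vadd_set_iff_neg_vadd_mem.mpr (by simpa using hT)⟩)
  refine ⟨t, ht.trans ?_⟩
  exact Set.iUnion₂_mono fun x _ => vadd_set_mono interior_subset

lemma covN_realize {K T : Set (E n)} (hK : IsCompact K) (hT : (0:E n) ∈ interior T) :
    ∃ s : Finset (E n), s.card ≤ covN K T ∧ K ⊆ ⋃ x ∈ s, x +ᵥ T := by
  obtain ⟨s, hs⟩ := exists_cover hK hT
  have hne : {N : ℕ | ∃ s : Finset (E n), s.card ≤ N ∧ K ⊆ ⋃ x ∈ s, x +ᵥ T}.Nonempty :=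
    ⟨s.card, s, le_rfl, hs⟩
  exact Nat.sInf_mem hne

lemma covN_mono_right {K T T' : Set (E n)} (hK : IsCompact K) (hT : (0:E n) ∈ interior T)
    (hTT' : T ⊆ T') : covN K T' ≤ covN K T := by
  obtain ⟨s, hcard, hs⟩ := covN_realize hK hT
  exact (covN_le (hs.trans (Set.iUnion₂_mono fun x _ => vadd_set_mono hTT'))).trans hcard

end Aux

section Chunk2
open MeasureTheory
variable {n : ℕ}

lemma covN_submul {K T : Set (E n)} (hK : IsSymCB K) (hT : IsSymCB T) {ε η : ℝ}
    (hε : 0 < ε) (hη : 0 < η) :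
    covN K ((ε * η) • T) ≤ covN K (ε • T) * covN T (η • T) := by
  classical
  have hTi : (0:E n) ∈ interior (ε • T) := by
    rw [interior_smul₀ hε.ne']; exact ⟨0, hT.zero_mem_interior, smul_zero ε⟩
  have hTi' : (0:E n) ∈ interior (η • T) := by
    rw [interior_smul₀ hη.ne']; exact ⟨0, hT.zero_mem_interior, smul_zero η⟩
  obtain ⟨s, hscard, hs⟩ := covN_realize hK.2.1 hTi
  obtain ⟨u, hucard, hu⟩ := covN_realize hT.2.1 hTi'
  have hcover : K ⊆ ⋃ z ∈ (s ×ˢ u).image (fun p => p.1 + ε • p.2), z +ᵥ (ε * η) • T := by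
    intro x hx
    obtain ⟨x₀, hx₀, hmem⟩ := mem_iUnion₂.1 (hs hx)
    obtain ⟨w, hw, hxw⟩ := hmem
    obtain ⟨t, ht, rfl⟩ := hw
    obtain ⟨y, hy, hmem'⟩ := mem_iUnion₂.1 (hu ht)
    obtain ⟨v, hv, htv⟩ := hmem'
    obtain ⟨r, hr, rfl⟩ := hv
    refine mem_iUnion₂.2 ⟨x₀ + ε • y, Finset.mem_image.2 ⟨(x₀, y),
      Finset.mem_product.2 ⟨hx₀, hy⟩, rfl⟩, ⟨(ε * η) • r, ⟨r, hr, rfl⟩, ?_⟩⟩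
    have h1 : x₀ + ε • (y + η • r) = x := by rw [← htv] at hxw; exact hxw
    rw [← h1]
    show (x₀ + ε • y) + (ε * η) • r = _
    rw [smul_add, smul_smul, add_assoc]
  calc covN K ((ε * η) • T) ≤ ((s ×ˢ u).image (fun p : E n × E n => p.1 + ε • p.2)).card :=
        covN_le hcover
    _ ≤ s.card * u.card := by
        refine (Finset.card_image_le).trans ?_
        rw [Finset.card_product]
    _ ≤ covN K (ε • T) * covN T (η • T) := Nat.mul_le_mul hscard hucard

lemma sep_card_le {T : Set (E n)} (hT : IsSymCB T) (s : Finset (E n)) (hsub : ↑s ⊆ T)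
    (hsep : ∀ x ∈ s, ∀ y ∈ s, x ≠ y → x - y ∉ (2⁻¹ : ℝ) • T) : s.card ≤ 5 ^ n := by
  obtain ⟨hconv, hcomp, hint, hsym⟩ := hT
  have hnegT : ∀ z : E n, z ∈ T → -z ∈ T := by
    intro z hz
    rw [hsym, Set.mem_neg, neg_neg]; exact hz
  set μ := (volume : MeasureTheory.Measure (E n)) with hμ
  have hμT_pos : 0 < μ T := Measure.measure_pos_of_nonempty_interior _ hint
  have hμT_lt : μ T < ⊤ := hcomp.measure_lt_top
  set g : E n → Set (E n) := fun x => x +ᵥ (4⁻¹ : ℝ) • T with hg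
  have hgcompact : ∀ x, IsCompact (g x) := fun x => (hcomp.smul (4⁻¹ : ℝ)).vadd x
  have hdisj : Set.PairwiseDisjoint (↑s) g := by
    intro x hx y hy hxy
    rw [Function.onFun, Set.disjoint_left]
    intro z hzx hzy
    obtain ⟨w₁, hw₁, hzw₁⟩ := hzx
    obtain ⟨t₁, ht₁, rfl⟩ := hw₁
    obtain ⟨w₂, hw₂, hzw₂⟩ := hzy
    obtain ⟨t₂, ht₂, rfl⟩ := hw₂
    refine hsep x hx y hy hxy ⟨2⁻¹ • t₂ + 2⁻¹ • (-t₁), hconv ht₂ (hnegT _ ht₁)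
      (by norm_num) (by norm_num) (by norm_num), ?_⟩
    have hx' : x + (4⁻¹ : ℝ) • t₁ = z := hzw₁
    have hy' : y + (4⁻¹ : ℝ) • t₂ = z := hzw₂
    have : x - y = (4⁻¹ : ℝ) • t₂ - (4⁻¹ : ℝ) • t₁ := by
      have := hx'.trans hy'.symm
      linear_combination (norm := module) this
    rw [this]
    match_scalars <;> norm_num
  have hsub54 : (⋃ x ∈ s, g x) ⊆ ((5/4 : ℝ) • T) := by
    intro z hz
    obtain ⟨x, hx, hmem⟩ := mem_iUnion₂.1 hz
    obtain ⟨w, hw, hzw⟩ := hmem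
    obtain ⟨t, ht, rfl⟩ := hw
    refine ⟨(4/5 : ℝ) • x + (1/5 : ℝ) • t, hconv (hsub hx) ht (by norm_num) (by norm_num)
      (by norm_num), ?_⟩
    rw [← hzw]
    show (5/4 : ℝ) • ((4/5 : ℝ) • x + (1/5 : ℝ) • t) = x + (4⁻¹ : ℝ) • t
    match_scalars <;> norm_num
  have hmeas_eq : ∀ x : E n, μ (g x) = ENNReal.ofReal ((4⁻¹ : ℝ) ^ n) * μ T := by
    intro x
    rw [hg]
    simp only []
    rw [measure_vadd]
    rw [MeasureTheory.Measure.addHaar_smul]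
    congr 2
    rw [finrank_euclideanSpace_fin]
    rw [abs_of_nonneg (by positivity)]
  have hkey : (s.card : ENNReal) * (ENNReal.ofReal ((4⁻¹ : ℝ) ^ n) * μ T)
      ≤ ENNReal.ofReal ((5/4 : ℝ) ^ n) * μ T := by
    calc (s.card : ENNReal) * (ENNReal.ofReal ((4⁻¹ : ℝ) ^ n) * μ T)
        = ∑ x ∈ s, μ (g x) := by rw [Finset.sum_congr rfl fun x _ => hmeas_eq x]; simp [mul_comm]
      _ = μ (⋃ x ∈ s, g x) := (MeasureTheory.measure_biUnion_finset hdisj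
            fun x _ => (hgcompact x).isClosed.measurableSet).symm
      _ ≤ μ ((5/4 : ℝ) • T) := MeasureTheory.measure_mono hsub54
      _ = ENNReal.ofReal ((5/4 : ℝ) ^ n) * μ T := by
          rw [MeasureTheory.Measure.addHaar_smul, finrank_euclideanSpace_fin,
            abs_of_nonneg (by positivity)]
  rw [← mul_assoc] at hkey
  have hkey2 : (s.card : ENNReal) * ENNReal.ofReal ((4⁻¹ : ℝ) ^ n)
      ≤ ENNReal.ofReal ((5/4 : ℝ) ^ n) :=
    (ENNReal.mul_le_mul_iff_left hμT_pos.ne' hμT_lt.ne).1 hkey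
  have h4 : ((s.card : ℝ) * (4⁻¹ : ℝ)^n) ≤ (5/4 : ℝ)^n := by
    rw [← ENNReal.ofReal_natCast, ← ENNReal.ofReal_mul (p := (s.card : ℝ)) (Nat.cast_nonneg _)] at hkey2
    exact (ENNReal.ofReal_le_ofReal_iff (by positivity)).1 hkey2
  have h6 : (s.card : ℝ) ≤ 5^n := by
    have h5 : ((4:ℝ)⁻¹)^n * 4^n = 1 := by rw [← mul_pow]; norm_num
    calc (s.card:ℝ) = (s.card * (4⁻¹ : ℝ)^n) * 4^n := by rw [mul_assoc, h5, mul_one]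
      _ ≤ (5/4 : ℝ)^n * 4^n := mul_le_mul_of_nonneg_right h4 (by positivity)
      _ = 5^n := by rw [← mul_pow]; norm_num
  exact_mod_cast h6

end Chunk2

section Chunk3
variable {n : ℕ}

lemma covN_half {T : Set (E n)} (hT : IsSymCB T) : covN T ((2⁻¹ : ℝ) • T) ≤ 5 ^ n := by
  classical
  set P : Finset (E n) → Prop := fun s => ↑s ⊆ T ∧
    ∀ x ∈ s, ∀ y ∈ s, x ≠ y → x - y ∉ (2⁻¹ : ℝ) • T with hP
  have hbound : ∀ s : Finset (E n), P s → s.card ≤ 5 ^ n := fun s hs =>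
    sep_card_le hT s hs.1 hs.2
  set cards : Set ℕ := {m | ∃ s : Finset (E n), P s ∧ s.card = m} with hcards
  have hne : cards.Nonempty := ⟨0, ∅, ⟨by simp, by simp⟩, by simp⟩
  have hbdd : BddAbove cards := ⟨5 ^ n, by rintro m ⟨s, hs, rfl⟩; exact hbound s hs⟩
  obtain ⟨s₀, hs₀, hcard₀⟩ := Nat.sSup_mem hne hbdd
  have hmax : ∀ s : Finset (E n), P s → s.card ≤ s₀.card := by
    intro s hs
    rw [hcard₀]
    exact le_csSup hbdd ⟨s, hs, rfl⟩
  have hzero : (0 : E n) ∈ (2⁻¹ : ℝ) • T := ⟨0, hT.zero_mem, smul_zero _⟩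
  have hcover : T ⊆ ⋃ x ∈ s₀, x +ᵥ (2⁻¹ : ℝ) • T := by
    intro t ht
    by_contra hcon
    have hnot : ∀ x ∈ s₀, t - x ∉ (2⁻¹ : ℝ) • T := by
      intro x hx hmem
      exact hcon (mem_iUnion₂.2 ⟨x, hx, ⟨t - x, hmem, by show x + (t - x) = t; abel⟩⟩)
    have htns : t ∉ s₀ := by
      intro hts
      exact hnot t hts (by simpa using hzero)
    have hPins : P (insert t s₀) := by
      constructor
      · intro z hz
        rcases Finset.mem_insert.1 (by exact_mod_cast hz) with rfl | hz'
        · exact ht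
        · exact hs₀.1 hz'
      · intro x hx y hy hxy
        rcases Finset.mem_insert.1 hx with hx' | hx' <;>
          rcases Finset.mem_insert.1 hy with hy' | hy'
        · exact absurd (hx'.trans hy'.symm) hxy
        · rw [hx']; exact hnot y hy'
        · rw [hy']
          intro hmem
          refine hnot x hx' ?_
          have h2 : t - x ∈ -((2⁻¹ : ℝ) • T) := by
            simpa [neg_sub] using Set.neg_mem_neg.2 hmem
          rwa [← Set.smul_set_neg, ← hT.2.2.2] at h2
        · exact hs₀.2 x hx' y hy' hxy
    have := hmax _ hPins
    rw [Finset.card_insert_of_notMem htns] at this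
    omega
  exact (covN_le hcover).trans (hcard₀ ▸ hbound s₀ hs₀)

end Chunk3

section Chunk4
variable {n : ℕ} {K T : Set (E n)}

lemma ek_nonneg (k : ℝ) (K T : Set (E n)) : 0 ≤ ek k K T :=
  Real.sInf_nonneg fun _ hx => hx.1.le

lemma ekSet_nonempty (hK : IsSymCB K) (hT : IsSymCB T) {k : ℝ} (hk : 0 ≤ k) :
    {ε : ℝ | 0 < ε ∧ (covN K (ε • T) : ℝ) ≤ (2 : ℝ) ^ k}.Nonempty := by
  obtain ⟨R, hR⟩ := (hK.2.1.isBounded).subset_ball 0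
  have hR' : K ⊆ Metric.ball 0 (max R 1) :=
    hR.trans (Metric.ball_subset_ball (le_max_left _ _))
  have hRpos : (0:ℝ) < max R 1 := lt_of_lt_of_le one_pos (le_max_right _ _)
  obtain ⟨r, hrpos, hrT⟩ := Metric.mem_nhds_iff.1
    (mem_interior_iff_mem_nhds.1 hT.zero_mem_interior)
  refine ⟨max R 1 / r, by positivity, ?_⟩
  have hsub : K ⊆ (max R 1 / r) • T := by
    intro x hx
    refine ⟨(r / max R 1) • x, hrT ?_, ?_⟩
    · rw [Metric.mem_ball, dist_zero_right, norm_smul]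
      have hxlt : ‖x‖ < max R 1 := by
        have := hR' hx
        rwa [Metric.mem_ball, dist_zero_right] at this
      rw [Real.norm_eq_abs, abs_of_pos (by positivity)]
      calc r / max R 1 * ‖x‖ < r / max R 1 * max R 1 := by
            exact mul_lt_mul_of_pos_left hxlt (by positivity)
        _ = r := by field_simp
    · show (max R 1 / r) • ((r / max R 1) • x) = x
      rw [smul_smul]
      have h1 : max R 1 / r * (r / max R 1) = 1 := by field_simp
      rw [h1, one_smul]
  have hcov : covN K ((max R 1 / r) • T) ≤ 1 := by
    have : K ⊆ ⋃ x ∈ ({0} : Finset (E n)), x +ᵥ (max R 1 / r) • T := by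
      intro x hx
      exact mem_iUnion₂.2 ⟨0, Finset.mem_singleton_self 0, ⟨x, hsub hx, by simp⟩⟩
    simpa using covN_le this
  calc (covN K ((max R 1 / r) • T) : ℝ) ≤ 1 := by exact_mod_cast hcov
    _ ≤ (2:ℝ) ^ k := Real.one_le_rpow one_le_two hk

lemma ek_le_of_mem {k ε : ℝ} (h : 0 < ε) (hcov : (covN K (ε • T) : ℝ) ≤ (2:ℝ) ^ k) :
    ek k K T ≤ ε :=
  csInf_le ⟨0, fun _ hx => hx.1.le⟩ ⟨h, hcov⟩

lemma covN_le_of_ek_lt (hK : IsSymCB K) (hT : IsSymCB T) {k ε : ℝ} (hk : 0 ≤ k)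
    (hε : ek k K T < ε) : (covN K (ε • T) : ℝ) ≤ (2:ℝ) ^ k := by
  obtain ⟨ε', hε'mem, hε'lt⟩ := exists_lt_of_csInf_lt (ekSet_nonempty hK hT hk) hε
  obtain ⟨hε'pos, hε'cov⟩ := hε'mem
  have hint : (0:E n) ∈ interior (ε' • T) := by
    rw [interior_smul₀ hε'pos.ne']; exact ⟨0, hT.zero_mem_interior, smul_zero ε'⟩
  have := covN_mono_right hK.2.1 hint
    (smul_subset_smul_of_le hT.1 hT.zero_mem hε'pos.le hε'lt.le)
  calc (covN K (ε • T) : ℝ) ≤ (covN K (ε' • T) : ℝ) := by exact_mod_cast this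
    _ ≤ (2:ℝ) ^ k := hε'cov

lemma ek_antitone (hK : IsSymCB K) (hT : IsSymCB T) {k k' : ℝ} (hk : 0 ≤ k) (hkk' : k ≤ k') :
    ek k' K T ≤ ek k K T :=
  csInf_le_csInf ⟨0, fun _ hx => hx.1.le⟩ (ekSet_nonempty hK hT hk)
    (fun ε hε => ⟨hε.1, hε.2.trans (Real.rpow_le_rpow_of_exponent_le one_le_two hkk')⟩)

lemma ek_decay (hK : IsSymCB K) (hT : IsSymCB T) (m : ℕ) :
    ek ((n + 3*n*m : ℕ) : ℝ) K T ≤ ek (n : ℝ) K T * (2⁻¹:ℝ)^m := by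
  by_contra hcon
  push_neg at hcon
  obtain ⟨c, hc1, hc2⟩ := exists_between hcon
  have hcpos : 0 < c := lt_of_le_of_lt (mul_nonneg (ek_nonneg _ _ _) (by positivity)) hc1
  set ε : ℝ := c * 2^m with hε
  have hεpos : 0 < ε := by positivity
  have hεgt : ek (n:ℝ) K T < ε := by
    rw [hε]
    rw [show ek (n:ℝ) K T = (ek (n:ℝ) K T * (2⁻¹:ℝ)^m) * 2^m by
      rw [mul_assoc, ← mul_pow]; norm_num]
    exact mul_lt_mul_of_pos_right hc1 (by positivity)
  have hcovn : (covN K (ε • T) : ℝ) ≤ (2:ℝ) ^ (n:ℝ) :=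
    covN_le_of_ek_lt hK hT (Nat.cast_nonneg n) hεgt
  have hcovn' : covN K (ε • T) ≤ 2 ^ n := by
    have h2 : ((2:ℝ)) ^ (n:ℝ) = ((2^n : ℕ) : ℝ) := by
      rw [Real.rpow_natCast]; push_cast; ring
    rw [h2] at hcovn
    exact_mod_cast hcovn
  have chain : ∀ j : ℕ, covN K ((ε * (2⁻¹:ℝ)^j) • T) ≤
      covN K (ε • T) * (covN T ((2⁻¹:ℝ) • T))^j := by
    intro j
    induction j with
    | zero => simp
    | succ j ih =>
      have heq : ε * (2⁻¹:ℝ)^(j+1) = (ε * (2⁻¹:ℝ)^j) * 2⁻¹ := by ring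
      rw [heq]
      calc covN K (((ε * (2⁻¹:ℝ)^j) * 2⁻¹) • T)
          ≤ covN K ((ε * (2⁻¹:ℝ)^j) • T) * covN T ((2⁻¹:ℝ) • T) :=
            covN_submul hK hT (by positivity) (by norm_num)
        _ ≤ (covN K (ε • T) * (covN T ((2⁻¹:ℝ) • T))^j) * covN T ((2⁻¹:ℝ) • T) :=
            Nat.mul_le_mul_right _ ih
        _ = covN K (ε • T) * (covN T ((2⁻¹:ℝ) • T))^(j+1) := by ring
  have hfull : covN K ((ε * (2⁻¹:ℝ)^m) • T) ≤ 2 ^ (n + 3*n*m) := by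
    calc covN K ((ε * (2⁻¹:ℝ)^m) • T) ≤ covN K (ε • T) * (covN T ((2⁻¹:ℝ) • T))^m :=
          chain m
      _ ≤ 2^n * (2^(3*n))^m := by
          refine Nat.mul_le_mul hcovn' (Nat.pow_le_pow_left ?_ m)
          calc covN T ((2⁻¹:ℝ) • T) ≤ 5^n := covN_half hT
            _ ≤ (2^3)^n := Nat.pow_le_pow_left (by norm_num) n
            _ = 2^(3*n) := by rw [← pow_mul, mul_comm]
      _ = 2 ^ (n + 3*n*m) := by rw [← pow_mul, ← pow_add]
  have hmem : ek ((n + 3*n*m : ℕ) : ℝ) K T ≤ ε * (2⁻¹:ℝ)^m := by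
    refine ek_le_of_mem (by positivity) ?_
    rw [Real.rpow_natCast]
    exact_mod_cast hfull
  have hfin : ε * (2⁻¹:ℝ)^m = c := by
    rw [hε, mul_assoc, ← mul_pow]
    norm_num
  rw [hfin] at hmem
  exact absurd hc2 (not_lt.2 hmem)

end Chunk4

section Chunk5
variable {n : ℕ} {K T : Set (E n)}

lemma ek_le_general (hK : IsSymCB K) (hT : IsSymCB T) {k : ℕ} (hk : n ≤ k) :
    ek (k:ℝ) K T ≤ ek (n:ℝ) K T * (2⁻¹:ℝ) ^ ((k - n)/(3*n)) := by
  set m := (k - n)/(3*n) with hmdef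
  have h1 : n + 3*n*m ≤ k := by
    have h2 : m * (3*n) ≤ k - n := Nat.div_mul_le_self (k - n) (3*n)
    have h3 : 3*n*m = m * (3*n) := by ring
    omega
  calc ek (k:ℝ) K T ≤ ek ((n + 3*n*m : ℕ):ℝ) K T :=
        ek_antitone hK hT (Nat.cast_nonneg _) (by exact_mod_cast h1)
    _ ≤ _ := ek_decay hK hT m

lemma two_rpow_bound {x : ℝ} (hx0 : 0 ≤ x) (hx1 : x ≤ 1) : (2:ℝ) ^ (-x) ≤ 1 - x/2 := by
  have h := convexOn_exp.2 (Set.mem_univ (-Real.log 2)) (Set.mem_univ 0) hx0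
    (by linarith : (0:ℝ) ≤ 1 - x) (by ring)
  have hL : Real.exp (x • (-Real.log 2) + (1 - x) • (0:ℝ)) = (2:ℝ) ^ (-x) := by
    rw [Real.rpow_def_of_pos (by norm_num : (0:ℝ) < 2)]
    congr 1
    simp [smul_eq_mul]
    ring
  have hR : x • Real.exp (-Real.log 2) + (1 - x) • Real.exp 0 = 1 - x/2 := by
    rw [Real.exp_neg, Real.exp_log (by norm_num : (0:ℝ) < 2), Real.exp_zero]
    simp [smul_eq_mul]
    ring
  rw [hL, hR] at h
  exact h

lemma pow_half_le (hn : 1 ≤ n) {j : ℕ} (hj : n ≤ j) :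
    (2⁻¹:ℝ) ^ ((j - n)/(3*n)) ≤ 2 * ((2:ℝ)^(-(3*(n:ℝ))⁻¹)) ^ (j - n) := by
  set jn := j - n with hjndef
  set m := jn / (3*n) with hmdef
  have hq : ((2:ℝ)^(-(3*(n:ℝ))⁻¹)) ^ jn = (2:ℝ)^(-((jn:ℝ)/(3*(n:ℝ)))) := by
    rw [← Real.rpow_natCast ((2:ℝ)^(-(3*(n:ℝ))⁻¹)) jn,
      ← Real.rpow_mul (by norm_num : (0:ℝ) ≤ 2)]
    congr 1
    field_simp
  have hm : (2⁻¹:ℝ)^m = (2:ℝ)^(-(m:ℝ)) := by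
    rw [Real.rpow_neg (by norm_num : (0:ℝ) ≤ 2), Real.rpow_natCast, inv_pow]
  have hnat : jn < 3*n*(m+1) := by
    have hr := Nat.div_add_mod jn (3*n)
    have hpos : 0 < 3*n := by omega
    have hrlt : jn % (3*n) < 3*n := Nat.mod_lt _ hpos
    rw [← hmdef] at hr
    set a := 3*n*m with hadef
    have : 3*n*(m+1) = a + 3*n := by rw [hadef]; ring
    omega
  have hexp : -(m:ℝ) ≤ 1 + -((jn:ℝ)/(3*(n:ℝ))) := by
    have h3n : (0:ℝ) < 3*(n:ℝ) := by positivity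
    have h4 : (jn:ℝ) < 3*(n:ℝ)*((m:ℝ)+1) := by exact_mod_cast hnat
    have h5 : (jn:ℝ)/(3*(n:ℝ)) ≤ (m:ℝ)+1 := by
      rw [div_le_iff₀ h3n]; nlinarith
    linarith
  calc (2⁻¹:ℝ)^m = (2:ℝ)^(-(m:ℝ)) := hm
    _ ≤ (2:ℝ)^(1 + -((jn:ℝ)/(3*(n:ℝ)))) := Real.rpow_le_rpow_of_exponent_le one_le_two hexp
    _ = 2 * (2:ℝ)^(-((jn:ℝ)/(3*(n:ℝ)))) := by
        rw [Real.rpow_add (by norm_num : (0:ℝ) < 2), Real.rpow_one]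
    _ = 2 * ((2:ℝ)^(-(3*(n:ℝ))⁻¹)) ^ jn := by rw [hq]

end Chunk5

lemma aux34 : ∀ m : ℕ, 3*m+4 ≤ 2^(m+2) := by
  intro m
  induction m with
  | zero => norm_num
  | succ m ih =>
    have h1 : 2^(m+2) ≥ 4 := by
      calc 2^(m+2) ≥ 2^2 := Nat.pow_le_pow_right (by norm_num) (by omega)
        _ = 4 := by norm_num
    have : 2^(m+1+2) = 2 * 2^(m+2) := by ring
    omega


theorem stmt9 (p : ℝ) (hp : 1 ≤ p) : ∃ C : ℝ, 0 < C ∧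
    ∀ (n : ℕ), 1 ≤ n → ∀ (K T : Set (E n)), IsSymCB K → IsSymCB T →
    ∑' k : {k : ℕ // 1 ≤ k}, ((k : ℝ) ^ (1 / p - 1) * ek (k : ℝ) K T) ≤
      C * Real.log (1 + n) *
        ⨆ k : {k : ℕ // 1 ≤ k}, ((k : ℝ) ^ (1 / p) * ek (k : ℝ) K T) := by
  classical
  have hp0 : 0 < p := lt_of_lt_of_le one_pos hp
  have hip0 : 0 < 1/p := by positivity
  have hip1 : 1/p ≤ 1 := by rw [div_le_one hp0]; exact hp
  refine ⟨24, by norm_num, ?_⟩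
  intro n hn K T hK hT
  have hn0 : (0:ℝ) < (n:ℝ) := by exact_mod_cast hn
  have hn1 : (1:ℝ) ≤ (n:ℝ) := by exact_mod_cast hn
  -- log facts
  have hlog2 : (0.6931471803:ℝ) < Real.log 2 := Real.log_two_gt_d9
  have hlogn : Real.log 2 ≤ Real.log (1 + (n:ℝ)) := Real.log_le_log (by norm_num) (by linarith)
  have hlogpos : (0:ℝ) < Real.log (1+(n:ℝ)) := lt_of_lt_of_le (by linarith) hlogn
  set e : ℕ → ℝ := fun j => ek (j:ℝ) K T with he
  have he_nonneg : ∀ j, 0 ≤ e j := fun j => ek_nonneg _ _ _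
  -- boundedness of the sup family
  have hbdd : BddAbove (Set.range fun k : {k : ℕ // 1 ≤ k} =>
      ((k : ℝ) ^ (1 / p) * ek (k : ℝ) K T)) := by
    refine ⟨7*(n:ℝ)*(e 1) + 4*(n:ℝ)*(e n), ?_⟩
    rintro x ⟨⟨k, hk1⟩, rfl⟩
    have hk1' : (1:ℝ) ≤ (k:ℝ) := by exact_mod_cast hk1
    have hpow : ((k:ℕ):ℝ)^(1/p) ≤ (k:ℝ) := by
      calc ((k:ℕ):ℝ)^(1/p) ≤ ((k:ℕ):ℝ)^(1:ℝ) :=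
            Real.rpow_le_rpow_of_exponent_le hk1' hip1
        _ = (k:ℝ) := Real.rpow_one _
    show ((k:ℕ):ℝ)^(1/p) * e k ≤ 7*(n:ℝ)*(e 1) + 4*(n:ℝ)*(e n)
    by_cases hcase : k ≤ 7*n
    · have h1 : e k ≤ e 1 := ek_antitone hK hT (by norm_num) (by exact_mod_cast hk1')
      have h2 : ((k:ℕ):ℝ)^(1/p) * e k ≤ (k:ℝ) * e 1 :=
        mul_le_mul hpow h1 (he_nonneg k) (by linarith)
      have h3 : (k:ℝ) * e 1 ≤ 7*(n:ℝ) * e 1 := by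
        have : (k:ℝ) ≤ 7*(n:ℝ) := by exact_mod_cast hcase
        exact mul_le_mul_of_nonneg_right this (he_nonneg 1)
      have h4 : (0:ℝ) ≤ 4*(n:ℝ)*(e n) := by
        have := he_nonneg n; positivity
      linarith
    · push_neg at hcase
      have hjn : n ≤ k := by omega
      have h2 : e k ≤ e n * (2⁻¹:ℝ)^((k-n)/(3*n)) := ek_le_general hK hT hjn
      set m := (k-n)/(3*n) with hmdef
      have hnat : k - n < 3*n*(m+1) := by
        have hr := Nat.div_add_mod (k-n) (3*n)
        have hpos : 0 < 3*n := by omega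
        have hrlt : (k-n) % (3*n) < 3*n := Nat.mod_lt _ hpos
        rw [← hmdef] at hr
        set a := 3*n*m with hadef
        have : 3*n*(m+1) = a + 3*n := by rw [hadef]; ring
        omega
      have hk_le : k ≤ n * 2^(m+2) := by
        have h34 := aux34 m
        have h5 : k < n + 3*n*(m+1) := by omega
        have h6 : n + 3*n*(m+1) = n*(3*m+4) := by ring
        have h7 : n*(3*m+4) ≤ n*2^(m+2) := Nat.mul_le_mul_left n h34
        omega
      have hkR : (k:ℝ) ≤ 4*(n:ℝ)*2^m := by
        have : (k:ℝ) ≤ (n:ℝ) * 2^(m+2) := by exact_mod_cast hk_le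
        calc (k:ℝ) ≤ (n:ℝ) * 2^(m+2) := this
          _ = 4*(n:ℝ)*2^m := by rw [pow_add]; ring
      have hhalf_pos : (0:ℝ) < (2⁻¹:ℝ)^m := by positivity
      have hstep : ((k:ℕ):ℝ)^(1/p) * e k ≤ (k:ℝ) * (e n * (2⁻¹:ℝ)^m) :=
        mul_le_mul hpow h2 (he_nonneg k) (by linarith)
      have hstep2 : (k:ℝ) * (e n * (2⁻¹:ℝ)^m) ≤ (4*(n:ℝ)*2^m) * (e n * (2⁻¹:ℝ)^m) := by
        refine mul_le_mul_of_nonneg_right hkR ?_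
        exact mul_nonneg (he_nonneg n) hhalf_pos.le
      have hstep3 : (4*(n:ℝ)*2^m) * (e n * (2⁻¹:ℝ)^m) = 4*(n:ℝ)*(e n) := by
        have h8 : (2:ℝ)^m * (2⁻¹:ℝ)^m = 1 := by
          rw [← mul_pow]; norm_num
        calc (4*(n:ℝ)*2^m) * (e n * (2⁻¹:ℝ)^m)
            = 4*(n:ℝ)*(e n) * ((2:ℝ)^m * (2⁻¹:ℝ)^m) := by ring
          _ = 4*(n:ℝ)*(e n) := by rw [h8, mul_one]
      have h4 : (0:ℝ) ≤ 7*(n:ℝ)*(e 1) := by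
        have := he_nonneg 1; positivity
      linarith
  set S : ℝ := ⨆ k : {k : ℕ // 1 ≤ k}, ((k : ℝ) ^ (1 / p) * ek (k : ℝ) K T) with hS
  have hFS : ∀ k : ℕ, 1 ≤ k → ((k:ℕ):ℝ)^(1/p) * e k ≤ S := by
    intro k hk
    exact le_ciSup hbdd ⟨k, hk⟩
  have hS1 : e 1 ≤ S := by
    have := hFS 1 le_rfl
    simpa [Real.one_rpow] using this
  have hS0 : 0 ≤ S := le_trans (he_nonneg 1) hS1
  -- geometric data
  set q : ℝ := (2:ℝ)^(-(3*(n:ℝ))⁻¹) with hq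
  have hq0 : (0:ℝ) ≤ q := (Real.rpow_pos_of_pos two_pos _).le
  have hq1 : q < 1 := by
    refine Real.rpow_lt_one_of_one_lt_of_neg one_lt_two ?_
    have : (0:ℝ) < (3*(n:ℝ))⁻¹ := by positivity
    linarith
  have hq_le : q ≤ 1 - (6*(n:ℝ))⁻¹ := by
    have hx1 : (3*(n:ℝ))⁻¹ ≤ 1 := by
      rw [inv_le_one_iff₀]
      right; linarith
    have h := two_rpow_bound (x := (3*(n:ℝ))⁻¹) (by positivity) hx1
    have heq : (3*(n:ℝ))⁻¹/2 = (6*(n:ℝ))⁻¹ := by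
      field_simp
      ring
    rw [heq] at h
    exact h
  have hgeom : ∀ N : ℕ, ∑ i ∈ Finset.range N, q^i ≤ 6*(n:ℝ) := by
    intro N
    have hsum : ∑ i ∈ Finset.range N, q^i ≤ (1-q)⁻¹ := by
      refine le_trans (Summable.sum_le_tsum _ (fun i _ => pow_nonneg hq0 i)
        (summable_geometric_of_lt_one hq0 hq1)) ?_
      rw [tsum_geometric_of_lt_one hq0 hq1]
    refine hsum.trans ?_
    have h6n : (0:ℝ) < (6*(n:ℝ))⁻¹ := by positivity
    have h1q : (6*(n:ℝ))⁻¹ ≤ 1 - q := by linarith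
    calc (1-q)⁻¹ ≤ ((6*(n:ℝ))⁻¹)⁻¹ := by
          exact inv_anti₀ h6n h1q
      _ = 6*(n:ℝ) := by rw [inv_inv]
  -- pointwise bounds
  have hhead : ∀ j:ℕ, 1 ≤ j → (j:ℝ)^(1/p-1) * e j ≤ S * ((j:ℝ))⁻¹ := by
    intro j hj
    have hj0 : (0:ℝ) < j := by exact_mod_cast hj
    have hsplit : (j:ℝ)^(1/p-1) = (j:ℝ)^(1/p) * ((j:ℝ))⁻¹ := by
      rw [Real.rpow_sub hj0, Real.rpow_one, div_eq_mul_inv]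
    rw [hsplit]
    calc (j:ℝ)^(1/p) * ((j:ℝ))⁻¹ * e j = ((j:ℝ)^(1/p) * e j) * ((j:ℝ))⁻¹ := by ring
      _ ≤ S * ((j:ℝ))⁻¹ := by
          exact mul_le_mul_of_nonneg_right (hFS j hj) (by positivity)
  have htail : ∀ j : ℕ, n ≤ j → (j:ℝ)^(1/p - 1) * e j ≤ 2 * (S/(n:ℝ)) * q^(j-n) := by
    intro j hj
    have hjR : (n:ℝ) ≤ (j:ℝ) := by exact_mod_cast hj
    have ha : (j:ℝ)^(1/p-1) ≤ (n:ℝ)^(1/p-1) :=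
      Real.rpow_le_rpow_of_nonpos hn0 hjR (by linarith)
    have hb : e j ≤ e n * (2⁻¹:ℝ)^((j-n)/(3*n)) := ek_le_general hK hT hj
    have hc : (2⁻¹:ℝ)^((j-n)/(3*n)) ≤ 2 * q^(j-n) := pow_half_le hn hj
    have hnen : (n:ℝ)^(1/p-1) * e n ≤ S/(n:ℝ) := by
      have hsplit : (n:ℝ)^(1/p-1) = (n:ℝ)^(1/p) * ((n:ℝ))⁻¹ := by
        rw [Real.rpow_sub hn0, Real.rpow_one, div_eq_mul_inv]
      rw [hsplit]
      calc (n:ℝ)^(1/p) * ((n:ℝ))⁻¹ * e n = ((n:ℝ)^(1/p) * e n) * ((n:ℝ))⁻¹ := by ring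
        _ ≤ S * ((n:ℝ))⁻¹ := mul_le_mul_of_nonneg_right (hFS n hn) (by positivity)
        _ = S/(n:ℝ) := by rw [div_eq_mul_inv]
    have hrnn : (0:ℝ) ≤ (n:ℝ)^(1/p-1) := Real.rpow_nonneg hn0.le _
    calc (j:ℝ)^(1/p-1) * e j ≤ (n:ℝ)^(1/p-1) * e j :=
          mul_le_mul_of_nonneg_right ha (he_nonneg j)
      _ ≤ (n:ℝ)^(1/p-1) * (e n * (2 * q^(j-n))) := by
          refine mul_le_mul_of_nonneg_left ?_ hrnn
          calc e j ≤ e n * (2⁻¹:ℝ)^((j-n)/(3*n)) := hb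
            _ ≤ e n * (2 * q^(j-n)) := mul_le_mul_of_nonneg_left hc (he_nonneg n)
      _ = ((n:ℝ)^(1/p-1) * e n) * 2 * q^(j-n) := by ring
      _ ≤ (S/(n:ℝ)) * 2 * q^(j-n) := by
          refine mul_le_mul_of_nonneg_right ?_ (pow_nonneg hq0 _)
          exact mul_le_mul_of_nonneg_right hnen (by norm_num)
      _ = 2 * (S/(n:ℝ)) * q^(j-n) := by ring
  -- final numeric facts
  have hnum1 : 1 + Real.log (7*(n:ℝ)) ≤ 6 * Real.log (1+(n:ℝ)) := by
    have hlog7 : Real.log 7 ≤ 3 * Real.log 2 := by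
      calc Real.log 7 ≤ Real.log 8 := Real.log_le_log (by norm_num) (by norm_num)
        _ = Real.log (2^3) := by norm_num
        _ = 3 * Real.log 2 := by rw [Real.log_pow]; push_cast; ring
    have hlogn' : Real.log (n:ℝ) ≤ Real.log (1+(n:ℝ)) := Real.log_le_log hn0 (by linarith)
    have hmul : Real.log (7*(n:ℝ)) = Real.log 7 + Real.log (n:ℝ) :=
      Real.log_mul (by norm_num) (by positivity)
    have h2 : Real.log 2 < 0.6931471808 := Real.log_two_lt_d9
    nlinarith [hlogn]
  have hnum2 : (12:ℝ) ≤ 18 * Real.log (1+(n:ℝ)) := by nlinarith [hlogn]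
  -- main sum bound
  refine tsum_le_of_sum_le' (by positivity) ?_
  intro s
  set g : ℕ → ℝ := fun j => (j:ℝ)^(1/p-1) * e j with hg
  have hg0 : ∀ j, 0 ≤ g j := fun j =>
    mul_nonneg (Real.rpow_nonneg (Nat.cast_nonneg j) _) (he_nonneg j)
  have hsum_eq : ∑ k ∈ s, (((k:ℕ):ℝ)^(1/p-1) * ek ((k:ℕ):ℝ) K T)
      = ∑ j ∈ s.image Subtype.val, g j := by
    rw [Finset.sum_image (fun x _ y _ h => Subtype.ext h)]
  rw [show (∑ k ∈ s, ((k : ℝ) ^ (1 / p - 1) * ek (k : ℝ) K T))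
      = ∑ j ∈ s.image Subtype.val, g j from hsum_eq]
  set t := s.image Subtype.val with ht
  have ht1 : ∀ j ∈ t, 1 ≤ j := by
    intro j hj
    obtain ⟨⟨k, hk⟩, _, rfl⟩ := Finset.mem_image.1 hj
    exact hk
  set M := t.sup id with hM
  have htsub : t ⊆ Finset.Icc 1 M := fun j hj =>
    Finset.mem_Icc.2 ⟨ht1 j hj, Finset.le_sup (f := id) hj⟩
  have hdisj : Disjoint (Finset.Icc 1 (7*n)) (Finset.Icc (7*n+1) M) := by
    rw [Finset.disjoint_left]
    intro j hj1 hj2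
    rw [Finset.mem_Icc] at hj1 hj2
    omega
  have hheadsum : ∑ j ∈ Finset.Icc 1 (7*n), g j ≤ S * (1 + Real.log (7*(n:ℝ))) := by
    calc ∑ j ∈ Finset.Icc 1 (7*n), g j ≤ ∑ j ∈ Finset.Icc 1 (7*n), S * ((j:ℝ))⁻¹ :=
          Finset.sum_le_sum (fun j hj => hhead j (Finset.mem_Icc.1 hj).1)
      _ = S * ∑ j ∈ Finset.Icc 1 (7*n), ((j:ℝ))⁻¹ := by rw [Finset.mul_sum]
      _ ≤ S * (1 + Real.log (7*(n:ℝ))) := by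
          refine mul_le_mul_of_nonneg_left ?_ hS0
          have hharm : ((harmonic (7*n) : ℚ) : ℝ) = ∑ j ∈ Finset.Icc 1 (7*n), ((j:ℝ))⁻¹ := by
            rw [harmonic_eq_sum_Icc]
            push_cast
            rfl
          rw [← hharm]
          have := harmonic_le_one_add_log (7*n)
          calc ((harmonic (7*n) : ℚ) : ℝ) ≤ 1 + Real.log ((7*n : ℕ):ℝ) := this
            _ = 1 + Real.log (7*(n:ℝ)) := by push_cast; ring_nf
  have htailsum : ∑ j ∈ Finset.Icc (7*n+1) M, g j ≤ 2*(S/(n:ℝ)) * (6*(n:ℝ)) := by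
    have hmem_n : ∀ j ∈ Finset.Icc (7*n+1) M, n ≤ j := by
      intro j hj
      have := (Finset.mem_Icc.1 hj).1
      omega
    calc ∑ j ∈ Finset.Icc (7*n+1) M, g j
        ≤ ∑ j ∈ Finset.Icc (7*n+1) M, 2*(S/(n:ℝ)) * q^(j-n) :=
          Finset.sum_le_sum (fun j hj => htail j (hmem_n j hj))
      _ = 2*(S/(n:ℝ)) * ∑ j ∈ Finset.Icc (7*n+1) M, q^(j-n) := by rw [Finset.mul_sum]
      _ ≤ 2*(S/(n:ℝ)) * (6*(n:ℝ)) := by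
          refine mul_le_mul_of_nonneg_left ?_ (by positivity)
          have himg : ∑ j ∈ Finset.Icc (7*n+1) M, q^(j-n)
              = ∑ i ∈ (Finset.Icc (7*n+1) M).image (· - n), q^i := by
            rw [Finset.sum_image]
            intro x hx y hy hxy
            have hx' := (Finset.mem_Icc.1 hx).1
            have hy' := (Finset.mem_Icc.1 hy).1
            have hxy' : x - n = y - n := hxy
            omega
          rw [himg]
          have hsubr : (Finset.Icc (7*n+1) M).image (· - n) ⊆ Finset.range (M+1) := by
            intro i hi
            obtain ⟨j, hj, rfl⟩ := Finset.mem_image.1 hi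
            have := (Finset.mem_Icc.1 hj).2
            rw [Finset.mem_range]
            omega
          calc ∑ i ∈ (Finset.Icc (7*n+1) M).image (· - n), q^i
              ≤ ∑ i ∈ Finset.range (M+1), q^i :=
                Finset.sum_le_sum_of_subset_of_nonneg hsubr
                  (fun i _ _ => pow_nonneg hq0 i)
            _ ≤ 6*(n:ℝ) := hgeom (M+1)
  have htail12 : 2*(S/(n:ℝ)) * (6*(n:ℝ)) = 12 * S := by
    field_simp
    ring
  calc ∑ j ∈ t, g j ≤ ∑ j ∈ Finset.Icc 1 M, g j :=
        Finset.sum_le_sum_of_subset_of_nonneg htsub (fun j _ _ => hg0 j)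
    _ ≤ ∑ j ∈ Finset.Icc 1 (7*n) ∪ Finset.Icc (7*n+1) M, g j := by
        refine Finset.sum_le_sum_of_subset_of_nonneg ?_ (fun j _ _ => hg0 j)
        intro j hj
        rw [Finset.mem_Icc] at hj
        rw [Finset.mem_union, Finset.mem_Icc, Finset.mem_Icc]
        omega
    _ = ∑ j ∈ Finset.Icc 1 (7*n), g j + ∑ j ∈ Finset.Icc (7*n+1) M, g j :=
        Finset.sum_union hdisj
    _ ≤ S * (1 + Real.log (7*(n:ℝ))) + 12 * S := by
        rw [← htail12]
        exact add_le_add hheadsum htailsum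
    _ ≤ 24 * Real.log (1 + (n:ℝ)) * S := by
        have h1 : S * (1 + Real.log (7*(n:ℝ))) ≤ S * (6 * Real.log (1+(n:ℝ))) :=
          mul_le_mul_of_nonneg_left hnum1 hS0
        have h2 : 12 * S ≤ 18 * Real.log (1+(n:ℝ)) * S := by
          have := mul_le_mul_of_nonneg_right hnum2 hS0
          linarith
        nlinarith
end

section
/- For ellipsoids K and T in ℝⁿ (images of the Euclidean unit ball under invertible linear maps), the covering numbers are exactly self-dual: N(K,T) = N(T°,K°). -/
open scoped Pointwise
open Set

namespace Dual19

variable {n : ℕ}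

lemma adj_cancel (S : E n ≃ₗ[ℝ] E n) (x : E n) :
    LinearMap.adjoint S.symm.toLinearMap (LinearMap.adjoint S.toLinearMap x) = x := by
  have h : S.toLinearMap ∘ₗ S.symm.toLinearMap = LinearMap.id := by
    ext y; simp
  have hid : LinearMap.adjoint (LinearMap.id : E n →ₗ[ℝ] E n) = LinearMap.id := by
    rw [← Module.End.one_eq_id, ← LinearMap.star_eq_adjoint, star_one]
  have h2 := congrArg LinearMap.adjoint h
  rw [LinearMap.adjoint_comp, hid] at h2
  exact DFunLike.congr_fun h2 x

lemma adj_cancel' (S : E n ≃ₗ[ℝ] E n) (x : E n) :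
    LinearMap.adjoint S.toLinearMap (LinearMap.adjoint S.symm.toLinearMap x) = x := by
  simpa using adj_cancel S.symm x

lemma inv_unique {P f g : E n → E n} (h1 : ∀ x, P (g x) = x) (h2 : ∀ x, f (P x) = x)
    (x : E n) : f x = g x := by
  calc f x = f (P (g x)) := by rw [h1]
  _ = g x := h2 _

lemma image_ball (S : E n ≃ₗ[ℝ] E n) :
    ⇑S '' Metric.closedBall 0 1 = {x : E n | ‖S.symm x‖ ≤ 1} := by
  ext x
  constructor
  · rintro ⟨y, hy, rfl⟩
    simpa using mem_closedBall_zero_iff.mp hy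
  · intro hx
    exact ⟨S.symm x, mem_closedBall_zero_iff.mpr hx, S.apply_symm_apply x⟩

lemma symm_image (S : E n ≃ₗ[ℝ] E n) (K : Set (E n)) : ⇑S.symm '' (⇑S '' K) = K := by
  rw [Set.image_image]; simp

lemma norm_symm_eq (M N : E n ≃ₗ[ℝ] E n)
    (h : ∀ x, M (LinearMap.adjoint M.toLinearMap x) = N (LinearMap.adjoint N.toLinearMap x))
    (x : E n) : ‖M.symm x‖ = ‖N.symm x‖ := by
  have hf : ∀ z, LinearMap.adjoint M.symm.toLinearMap (M.symm z)
      = LinearMap.adjoint N.symm.toLinearMap (N.symm z) := by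
    refine inv_unique (P := fun x => M (LinearMap.adjoint M.toLinearMap x)) ?_ ?_
    · intro z
      show M (LinearMap.adjoint M.toLinearMap
        ((LinearMap.adjoint N.symm.toLinearMap) (N.symm z))) = z
      rw [h]
      have : LinearMap.adjoint N.toLinearMap (LinearMap.adjoint N.symm.toLinearMap (N.symm z))
          = N.symm z := adj_cancel' N _
      rw [this, N.apply_symm_apply]
    · intro z
      show LinearMap.adjoint M.symm.toLinearMap
        (M.symm (M (LinearMap.adjoint M.toLinearMap z))) = z
      have : LinearMap.adjoint M.symm.toLinearMap
          (M.symm (M (LinearMap.adjoint M.toLinearMap z)))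
          = LinearMap.adjoint M.symm.toLinearMap (LinearMap.adjoint M.toLinearMap z) := by
        rw [M.symm_apply_apply]
      rw [this, adj_cancel]
  have key : ‖M.symm x‖ ^ 2 = ‖N.symm x‖ ^ 2 := by
    rw [← real_inner_self_eq_norm_sq, ← real_inner_self_eq_norm_sq]
    calc (inner ℝ (M.symm x) (M.symm x) : ℝ)
        = inner ℝ (LinearMap.adjoint M.symm.toLinearMap (M.symm x)) x := by
          rw [LinearMap.adjoint_inner_left]; rfl
      _ = inner ℝ (LinearMap.adjoint N.symm.toLinearMap (N.symm x)) x := by rw [hf]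
      _ = (inner ℝ (N.symm x) (N.symm x) : ℝ) := by
          rw [LinearMap.adjoint_inner_left]; rfl
  have := congrArg Real.sqrt key
  simpa [Real.sqrt_sq (norm_nonneg _)] using this

lemma image_ball_eq (M N : E n ≃ₗ[ℝ] E n)
    (h : ∀ x, M (LinearMap.adjoint M.toLinearMap x) = N (LinearMap.adjoint N.toLinearMap x)) :
    ⇑M '' Metric.closedBall 0 1 = ⇑N '' Metric.closedBall 0 1 := by
  rw [image_ball, image_ball]
  ext x
  simp [norm_symm_eq M N h x]


/-- adjoint as a linear equivalence -/
noncomputable def adjE (S : E n ≃ₗ[ℝ] E n) : E n ≃ₗ[ℝ] E n :=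
  LinearEquiv.ofLinear (LinearMap.adjoint S.toLinearMap)
    (LinearMap.adjoint S.symm.toLinearMap)
    (LinearMap.ext fun x => adj_cancel' S x)
    (LinearMap.ext fun x => adj_cancel S x)

@[simp] lemma adjE_apply (S : E n ≃ₗ[ℝ] E n) (x : E n) :
    adjE S x = LinearMap.adjoint S.toLinearMap x := rfl

@[simp] lemma adjE_symm_apply (S : E n ≃ₗ[ℝ] E n) (x : E n) :
    (adjE S).symm x = LinearMap.adjoint S.symm.toLinearMap x := rfl

lemma inner_ball_iff (v : E n) : (∀ z : E n, ‖z‖ ≤ 1 → (inner ℝ v z : ℝ) ≤ 1) ↔ ‖v‖ ≤ 1 := by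
  constructor
  · intro h
    rcases eq_or_ne v 0 with rfl | hv
    · simp
    · have hnorm : ‖(‖v‖⁻¹ • v : E n)‖ ≤ 1 := by
        rw [norm_smul]
        simp [norm_inv, inv_mul_cancel₀ (norm_ne_zero_iff.mpr hv)]
      have := h _ hnorm
      rw [real_inner_smul_right, real_inner_self_eq_norm_sq] at this
      have hv' : (0:ℝ) < ‖v‖ := norm_pos_iff.mpr hv
      calc ‖v‖ = ‖v‖⁻¹ * ‖v‖ ^ 2 := by field_simp
      _ ≤ 1 := this
  · intro h z hz
    calc (inner ℝ v z : ℝ) ≤ ‖v‖ * ‖z‖ := real_inner_le_norm v z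
    _ ≤ 1 * 1 := by
        apply mul_le_mul h hz (norm_nonneg _) zero_le_one
    _ = 1 := by ring

lemma polar_image (S : E n ≃ₗ[ℝ] E n) :
    polar (⇑S '' Metric.closedBall 0 1) = ⇑(adjE S).symm '' Metric.closedBall 0 1 := by
  rw [image_ball ((adjE S).symm)]
  ext x
  simp only [polar, Set.mem_setOf_eq, LinearEquiv.symm_symm, adjE_apply]
  rw [← inner_ball_iff (LinearMap.adjoint S.toLinearMap x)]
  constructor
  · intro h z hz
    rw [LinearMap.adjoint_inner_left]
    exact h _ ⟨z, mem_closedBall_zero_iff.mpr hz, rfl⟩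
  · rintro h y ⟨z, hz, rfl⟩
    have := h z (mem_closedBall_zero_iff.mp hz)
    rwa [LinearMap.adjoint_inner_left] at this

lemma covN_sub (S : E n ≃ₗ[ℝ] E n) (K T : Set (E n)) (N : ℕ)
    (h : ∃ s : Finset (E n), s.card ≤ N ∧ K ⊆ ⋃ x ∈ s, x +ᵥ T) :
    ∃ s : Finset (E n), s.card ≤ N ∧ ⇑S '' K ⊆ ⋃ x ∈ s, x +ᵥ ⇑S '' T := by
  classical
  obtain ⟨s, hc, hcov⟩ := h
  refine ⟨s.image S, le_trans (Finset.card_image_le) hc, ?_⟩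
  rintro z ⟨k, hk, rfl⟩
  obtain ⟨x, hx, hkx⟩ := Set.mem_iUnion₂.mp (hcov hk)
  obtain ⟨t, ht, htx⟩ := Set.mem_vadd_set.mp hkx
  refine Set.mem_iUnion₂.mpr ⟨S x, Finset.mem_image_of_mem _ hx, ?_⟩
  refine Set.mem_vadd_set.mpr ⟨S t, ⟨t, ht, rfl⟩, ?_⟩
  rw [vadd_eq_add, ← map_add]
  rw [vadd_eq_add] at htx
  rw [htx]

lemma covN_image (S : E n ≃ₗ[ℝ] E n) (K T : Set (E n)) :
    covN (⇑S '' K) (⇑S '' T) = covN K T := by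
  unfold covN
  congr 1
  ext N
  constructor
  · intro h
    have h2 := covN_sub S.symm _ _ N h
    rwa [symm_image, symm_image] at h2
  · exact covN_sub S K T N

open scoped MatrixOrder in
lemma exists_C (M : E n ≃ₗ[ℝ] E n) :
    ∃ C : E n ≃ₗ[ℝ] E n,
      (∀ x, LinearMap.adjoint C.toLinearMap x = C x) ∧
      (∀ x, C (C x) = M (LinearMap.adjoint M.toLinearMap x)) := by
  classical
  set Q : Matrix (Fin n) (Fin n) ℝ := Matrix.toEuclideanLin.symm M.toLinearMap with hQdef
  have hQ : Matrix.toEuclideanLin Q = M.toLinearMap := Matrix.toEuclideanLin.apply_symm_apply _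
  have hpsd := Matrix.posSemidef_self_mul_conjTranspose Q
  have hH : (CFC.sqrt (Q * Q.conjTranspose)).IsHermitian :=
    (Matrix.nonneg_iff_posSemidef.mp (CFC.sqrt_nonneg _)).1
  have hsq : CFC.sqrt (Q * Q.conjTranspose) * CFC.sqrt (Q * Q.conjTranspose) = Q * Q.conjTranspose :=
    CFC.sqrt_mul_sqrt_self _ hpsd.nonneg
  set Cl : E n →ₗ[ℝ] E n := Matrix.toEuclideanLin (CFC.sqrt (Q * Q.conjTranspose)) with hCl
  have hmul : ∀ (X Y : Matrix (Fin n) (Fin n) ℝ),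
      Matrix.toEuclideanLin (X * Y) = (Matrix.toEuclideanLin X) ∘ₗ (Matrix.toEuclideanLin Y) := by
    intro X Y
    rw [Matrix.toEuclideanLin_eq_toLin]
    exact Matrix.toLin_mul _ _ _ X Y
  have hadj : LinearMap.adjoint Cl = Cl := by
    rw [hCl, ← Matrix.toEuclideanLin_conjTranspose_eq_adjoint, hH.eq]
  have hCC : Cl ∘ₗ Cl = M.toLinearMap ∘ₗ LinearMap.adjoint M.toLinearMap := by
    rw [hCl, ← hmul, hsq, hmul, Matrix.toEuclideanLin_conjTranspose_eq_adjoint, hQ]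
  have hCCx : ∀ x, Cl (Cl x) = M (LinearMap.adjoint M.toLinearMap x) := by
    intro x
    have := DFunLike.congr_fun hCC x
    simpa using this
  have hinj : Function.Injective Cl := by
    intro x y hxy
    have h2 : M (LinearMap.adjoint M.toLinearMap x) = M (LinearMap.adjoint M.toLinearMap y) := by
      rw [← hCCx, ← hCCx, hxy]
    have h3 := M.injective h2
    have h4 := congrArg (LinearMap.adjoint M.symm.toLinearMap) h3
    rwa [adj_cancel, adj_cancel] at h4
  have hsurj : Function.Surjective Cl := by
    intro y
    refine ⟨Cl (LinearMap.adjoint M.symm.toLinearMap (M.symm y)), ?_⟩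
    rw [hCCx, adj_cancel' M, M.apply_symm_apply]
  refine ⟨LinearEquiv.ofBijective Cl ⟨hinj, hsurj⟩, ?_, ?_⟩
  · intro x
    show LinearMap.adjoint (LinearEquiv.ofBijective Cl ⟨hinj, hsurj⟩).toLinearMap x = Cl x
    have : (LinearEquiv.ofBijective Cl ⟨hinj, hsurj⟩).toLinearMap = Cl := rfl
    rw [this, hadj]
  · intro x
    exact hCCx x

end Dual19

theorem stmt19 {n : ℕ} (A B : E n ≃ₗ[ℝ] E n)
    (K T : Set (E n)) (hK : K = A '' Metric.closedBall 0 1)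
    (hT : T = B '' Metric.closedBall 0 1) :
    covN K T = covN (polar T) (polar K) := by
  classical
  subst hK hT
  set M := B.trans A.symm with hM
  obtain ⟨C, hCadj, hCC⟩ := Dual19.exists_C M
  have hMlin : M.toLinearMap = A.symm.toLinearMap ∘ₗ B.toLinearMap :=
    LinearMap.ext fun x => rfl
  have hMadj : ∀ x, LinearMap.adjoint M.toLinearMap x
      = LinearMap.adjoint B.toLinearMap (LinearMap.adjoint A.symm.toLinearMap x) := by
    intro x
    rw [hMlin, LinearMap.adjoint_comp]
    rfl
  set W := (Dual19.adjE B).symm.trans (Dual19.adjE A) with hW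
  have hWlin : W.toLinearMap
      = LinearMap.adjoint A.toLinearMap ∘ₗ LinearMap.adjoint B.symm.toLinearMap :=
    LinearMap.ext fun x => rfl
  have hWadj : ∀ x, LinearMap.adjoint W.toLinearMap x = B.symm (A x) := by
    intro x
    rw [hWlin, LinearMap.adjoint_comp, LinearMap.adjoint_adjoint, LinearMap.adjoint_adjoint]
    rfl
  have hCsadj : ∀ x, LinearMap.adjoint C.symm.toLinearMap x = C.symm x := by
    refine Dual19.inv_unique (P := ⇑C) (fun x => C.apply_symm_apply x) (fun x => ?_)
    show LinearMap.adjoint C.symm.toLinearMap (C x) = x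
    rw [← hCadj]
    exact Dual19.adj_cancel C x
  have hMC : ∀ x, M (LinearMap.adjoint M.toLinearMap x)
      = C (LinearMap.adjoint C.toLinearMap x) := fun x => by
    rw [hCadj]; exact (hCC x).symm
  have hWC : ∀ x, W (LinearMap.adjoint W.toLinearMap x)
      = C.symm (LinearMap.adjoint C.symm.toLinearMap x) := by
    intro x
    rw [hCsadj]
    refine Dual19.inv_unique (P := fun y => C (C y))
      (f := fun y => W (LinearMap.adjoint W.toLinearMap y))
      (g := fun y => C.symm (C.symm y)) ?_ ?_ x
    · intro y
      show C (C (C.symm (C.symm y))) = y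
      simp
    · intro y
      show W (LinearMap.adjoint W.toLinearMap (C (C y))) = y
      rw [hCC, hWadj, hMadj, hM, hW, LinearEquiv.trans_apply, LinearEquiv.trans_apply,
        LinearEquiv.apply_symm_apply, LinearEquiv.symm_apply_apply,
        Dual19.adjE_symm_apply, Dual19.adjE_apply, Dual19.adj_cancel B, Dual19.adj_cancel' A]
  have himg1 : ⇑M '' Metric.closedBall 0 1 = ⇑C '' Metric.closedBall 0 1 :=
    Dual19.image_ball_eq M C hMC
  have himg2 : ⇑W '' Metric.closedBall 0 1 = ⇑C.symm '' Metric.closedBall 0 1 :=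
    Dual19.image_ball_eq W C.symm hWC
  have L1 : covN (⇑A '' Metric.closedBall 0 1) (⇑B '' Metric.closedBall 0 1)
      = covN (⇑C.symm '' Metric.closedBall 0 1) (Metric.closedBall 0 1) := by
    rw [← Dual19.covN_image A.symm (⇑A '' Metric.closedBall 0 1) (⇑B '' Metric.closedBall 0 1),
      Dual19.symm_image]
    have h3 : ⇑A.symm '' (⇑B '' Metric.closedBall 0 1) = ⇑M '' Metric.closedBall 0 1 := by
      rw [Set.image_image]
      exact Set.image_congr fun x _ => rfl
    rw [h3, himg1, ← Dual19.covN_image C.symm (Metric.closedBall 0 1)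
      (⇑C '' Metric.closedBall 0 1), Dual19.symm_image]
  have R1 : covN (polar (⇑B '' Metric.closedBall 0 1)) (polar (⇑A '' Metric.closedBall 0 1))
      = covN (⇑C.symm '' Metric.closedBall 0 1) (Metric.closedBall 0 1) := by
    rw [Dual19.polar_image, Dual19.polar_image,
      ← Dual19.covN_image (Dual19.adjE A) (⇑(Dual19.adjE B).symm '' Metric.closedBall 0 1)
        (⇑(Dual19.adjE A).symm '' Metric.closedBall 0 1)]
    have h2 : ⇑(Dual19.adjE A) '' (⇑(Dual19.adjE A).symm '' Metric.closedBall 0 1)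
        = Metric.closedBall 0 1 := by
      have := Dual19.symm_image (Dual19.adjE A).symm (Metric.closedBall (0 : E n) 1)
      simpa using this
    have h3 : ⇑(Dual19.adjE A) '' (⇑(Dual19.adjE B).symm '' Metric.closedBall 0 1)
        = ⇑W '' Metric.closedBall 0 1 := by
      rw [Set.image_image]
      exact Set.image_congr fun x _ => rfl
    rw [h2, h3, himg2]
  rw [L1, R1]
end
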